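/- Let T be a locally finite tree, let A be a set of vertices of T, let r ≥ 1 be an integer, and suppose that v is a vertex of T such that deleting v from T leaves at least three connected components each containing infinitely many elements of A. Let o be a vertex of T at graph distance d(o,v) < r from v. Then: (a) there exist at least two distinct vertices of T at distance exactly r from o; and (b) for every pair of (not necessarily distinct) vertices v', w' each at distance exactly r from o, the set A ∖ (A_{o,v'} ∪ A_{o,w'}) is infinite. In particular, o is (k,r)-branching for A for every integer k ≥ 1. -/

import Mathlib

variable {V : Type*}

/-- The unique simple path from `u` to `a` passes through `v` (in a tree, every simple path
from `u` to `a` contains `v` in its support). -/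
def PassesThrough (G : SimpleGraph V) (u a v : V) : Prop :=
  ∀ p : G.Walk u a, p.IsPath → v ∈ p.support

/-- `A_{u,v}`: the set of vertices `a ∈ A \ {v}` such that the unique simple path
from `u` to `a` passes through `v`. -/
def BranchSet (G : SimpleGraph V) (A : Set V) (u v : V) : Set V :=
  {a | a ∈ A ∧ a ≠ v ∧ PassesThrough G u a v}

/-- A vertex `u` is `(k,r)`-branching for `A` if there are at least two distinct vertices at
distance exactly `r` from `u`, and `|A \ (A_{u,v} ∪ A_{u,w})| ≥ k` for every pair of vertices
`v, w` at distance exactly `r` from `u`. -/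
def IsBranching (G : SimpleGraph V) (A : Set V) (k r : ℕ) (u : V) : Prop :=
  (∃ v w : V, v ≠ w ∧ G.dist u v = r ∧ G.dist u w = r) ∧
    ∀ v w : V, G.dist u v = r → G.dist u w = r →
      (k : ℕ∞) ≤ (A \ (BranchSet G A u v ∪ BranchSet G A u w)).encard

/-- The connected component `C` of the graph obtained from `G` by deleting the vertex set `S`
contains infinitely many elements of `A`. -/
def CompInfinite (G : SimpleGraph V) (S A : Set V) (C : (G.induce Sᶜ).ConnectedComponent) :
    Prop :=
  {x : ↥Sᶜ | (G.induce Sᶜ).connectedComponentMk x = C ∧ (x : V) ∈ A}.Infinite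

/-- Deleting the vertex set `S` from `G` leaves at least three connected components, each
containing infinitely many elements of `A`. -/
def ThreeEnds (G : SimpleGraph V) (S A : Set V) : Prop :=
  ∃ C₁ C₂ C₃ : (G.induce Sᶜ).ConnectedComponent,
    C₁ ≠ C₂ ∧ C₁ ≠ C₃ ∧ C₂ ≠ C₃ ∧
      CompInfinite G S A C₁ ∧ CompInfinite G S A C₂ ∧ CompInfinite G S A C₃

/-! ### Auxiliary lemmas -/

/-- In a tree, every path has length equal to the distance between its endpoints. -/
lemma tree_path_length_eq_dist {G : SimpleGraph V} (hT : G.IsTree) {u w : V}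
    (p : G.Walk u w) (hp : p.IsPath) : p.length = G.dist u w := by
  obtain ⟨q, hq⟩ := hT.isConnected.exists_walk_length_eq_dist u w
  have hqp : q.IsPath := q.isPath_of_length_eq_dist hq
  obtain ⟨p₀, hp₀, huniq⟩ := hT.existsUnique_path u w
  rw [huniq p hp, ← huniq q hqp, hq]

/-- If `v` lies on a path from `u` to `a` in a tree, distances add up. -/
lemma tree_dist_add_of_mem_support {G : SimpleGraph V} (hT : G.IsTree) {u a v : V}
    (p : G.Walk u a) (hp : p.IsPath) (hv : v ∈ p.support) :
    G.dist u a = G.dist u v + G.dist v a := by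
  classical
  have h1 := tree_path_length_eq_dist hT _ (hp.takeUntil hv)
  have h2 := tree_path_length_eq_dist hT _ (hp.dropUntil hv)
  have h3 := tree_path_length_eq_dist hT p hp
  have h4 := congrArg SimpleGraph.Walk.length (p.take_spec hv)
  rw [SimpleGraph.Walk.length_append] at h4
  omega

/-- A walk avoiding `v` lifts to reachability in the graph with `v` deleted. -/
lemma reachable_induce_of_walk {G : SimpleGraph V} (v : V) :
    ∀ {u w : V} (p : G.Walk u w), v ∉ p.support →
      ∀ (hu : u ∈ ({v}ᶜ : Set V)) (hw : w ∈ ({v}ᶜ : Set V)),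
        (G.induce ({v}ᶜ : Set V)).Reachable ⟨u, hu⟩ ⟨w, hw⟩ := by
  intro u w p
  induction p with
  | nil => intro _ _ _; exact SimpleGraph.Reachable.refl _
  | @cons x y z h q ih =>
      intro hv hu hw
      rw [SimpleGraph.Walk.support_cons, List.mem_cons] at hv
      push_neg at hv
      have hy : y ∈ ({v}ᶜ : Set V) := by
        simp only [Set.mem_compl_iff, Set.mem_singleton_iff]
        intro hyv
        exact hv.2 (hyv ▸ q.start_mem_support)
      have hadj : (G.induce ({v}ᶜ : Set V)).Adj ⟨x, hu⟩ ⟨y, hy⟩ := by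
        simpa using h
      exact hadj.reachable.trans (ih hv.2 hy hw)

/-- Key component lemma: if `dist o v < dist o x`, `dist o a = dist o x + dist x a`,
and `a, x ≠ v`, then `a` and `x` are in the same component of `G` minus `v`. -/
lemma comp_eq_aux {G : SimpleGraph V} (hT : G.IsTree) {o v x a : V}
    (hov : G.dist o v < G.dist o x) (hkey : G.dist o a = G.dist o x + G.dist x a)
    (hav : a ∈ ({v}ᶜ : Set V)) (hxv : x ∈ ({v}ᶜ : Set V)) :
    (G.induce ({v}ᶜ : Set V)).connectedComponentMk ⟨a, hav⟩ =
      (G.induce ({v}ᶜ : Set V)).connectedComponentMk ⟨x, hxv⟩ := by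
  obtain ⟨q, hq, -⟩ := hT.existsUnique_path x a
  have hvq : v ∉ q.support := by
    intro hvq
    have h1 : G.dist x a = G.dist x v + G.dist v a :=
      tree_dist_add_of_mem_support hT q hq hvq
    have hxvne : x ≠ v := by simpa using hxv
    have h2 : G.dist x v ≠ 0 := fun h0 => hxvne (hT.isConnected.dist_eq_zero_iff.mp h0)
    have h3 : G.dist o a ≤ G.dist o v + G.dist v a := hT.isConnected.dist_triangle
    omega
  exact (SimpleGraph.ConnectedComponent.sound
    ((reachable_induce_of_walk v q hvq hxv hav).symm))

/-- Membership in a branch set forces membership in the component of `x` (when `x` is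
farther from `o` than `v` is). -/
lemma branchSet_comp {G : SimpleGraph V} (hT : G.IsTree) {A : Set V} {o v x a : V}
    (hov : G.dist o v < G.dist o x) (ha : a ∈ BranchSet G A o x) :
    ∃ (hav : a ∈ ({v}ᶜ : Set V)) (hxv : x ∈ ({v}ᶜ : Set V)),
      (G.induce ({v}ᶜ : Set V)).connectedComponentMk ⟨a, hav⟩ =
        (G.induce ({v}ᶜ : Set V)).connectedComponentMk ⟨x, hxv⟩ := by
  obtain ⟨hA, hax, hpass⟩ := ha
  obtain ⟨p, hp, -⟩ := hT.existsUnique_path o a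
  have hxp : x ∈ p.support := hpass p hp
  have hkey : G.dist o a = G.dist o x + G.dist x a :=
    tree_dist_add_of_mem_support hT p hp hxp
  have hxv : x ∈ ({v}ᶜ : Set V) := by
    simp only [Set.mem_compl_iff, Set.mem_singleton_iff]
    intro h; rw [h] at hov; omega
  have hav : a ∈ ({v}ᶜ : Set V) := by
    simp only [Set.mem_compl_iff, Set.mem_singleton_iff]
    intro h
    subst h
    have h3 : G.dist x a ≥ 0 := Nat.zero_le _
    omega
  exact ⟨hav, hxv, comp_eq_aux hT hov hkey hav hxv⟩

/-- In a connected graph, along a geodesic there is a vertex at each intermediate distance. -/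
lemma exists_vertex_at_dist {G : SimpleGraph V} (hconn : G.Connected) (o a : V) :
    ∀ n, n ≤ G.dist o a → ∃ x : V, G.dist o x = n ∧ G.dist x a = G.dist o a - n := by
  intro n
  induction n with
  | zero => intro _; exact ⟨o, SimpleGraph.dist_self, by omega⟩
  | succ n ih =>
      intro hn
      obtain ⟨x, hx1, hx2⟩ := ih (by omega)
      have hxa : G.dist x a ≠ 0 := by omega
      obtain ⟨p, hp⟩ := hconn.exists_walk_length_eq_dist x a
      cases p with
      | nil => simp at hp; omega
      | @cons _ y _ h q =>
          have hq : G.dist y a ≤ q.length := SimpleGraph.dist_le q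
          have hlen : q.length + 1 = G.dist x a := by
            simpa [SimpleGraph.Walk.length_cons] using hp
          have hxy : G.dist x y ≤ 1 := by
            simpa using SimpleGraph.dist_le (SimpleGraph.Walk.cons h SimpleGraph.Walk.nil)
          have t1 : G.dist x a ≤ G.dist x y + G.dist y a := hconn.dist_triangle
          have t2 : G.dist o y ≤ G.dist o x + G.dist x y := hconn.dist_triangle
          have t3 : G.dist o a ≤ G.dist o y + G.dist y a := hconn.dist_triangle
          exact ⟨y, by omega, by omega⟩

/-- Balls are finite in a connected locally finite graph. -/
lemma ball_finite {G : SimpleGraph V} (hconn : G.Connected) (hlf : G.LocallyFinite)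
    (o : V) : ∀ n : ℕ, {x : V | G.dist o x ≤ n}.Finite := by
  intro n
  induction n with
  | zero =>
      apply Set.Finite.subset (Set.finite_singleton o)
      intro x hx
      simp only [Set.mem_setOf_eq, Nat.le_zero] at hx
      simp [(hconn.dist_eq_zero_iff.mp hx).symm]
  | succ n ih =>
      have hfin : ({x : V | G.dist o x ≤ n} ∪
          ⋃ y ∈ {x : V | G.dist o x ≤ n}, G.neighborSet y).Finite := by
        refine ih.union (ih.biUnion ?_)
        intro y _
        haveI := hlf y
        exact (G.neighborSet y).toFinite
      apply hfin.subset
      intro x hx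
      simp only [Set.mem_setOf_eq] at hx
      by_cases hle : G.dist o x ≤ n
      · exact Or.inl hle
      · have hd : G.dist o x = n + 1 := by omega
        have hne : G.dist x o ≠ 0 := by
          rw [SimpleGraph.dist_comm]; omega
        obtain ⟨p, hp⟩ := hconn.exists_walk_length_eq_dist x o
        cases p with
        | nil => simp at hp; exact absurd SimpleGraph.dist_self hne
        | @cons _ y _ h q =>
            have hq : G.dist y o ≤ q.length := SimpleGraph.dist_le q
            have hlen : q.length + 1 = G.dist x o := by
              simpa [SimpleGraph.Walk.length_cons] using hp
            have e1 : G.dist x o = G.dist o x := SimpleGraph.dist_comm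
            have e2 : G.dist o y = G.dist y o := SimpleGraph.dist_comm
            have hdist : G.dist o y ≤ n := by omega
            exact Or.inr (Set.mem_biUnion hdist h.symm)

/-- If `dist o v < r` and `C` is an infinite component missing `o`'s direction budget,
produce a vertex at distance exactly `r` from `o` lying in `C`. -/
lemma exists_vertex_at_dist_in_comp {G : SimpleGraph V} (hT : G.IsTree)
    (hlf : G.LocallyFinite) {A : Set V} {v : V} {r : ℕ}
    (C : (G.induce ({v} : Set V)ᶜ).ConnectedComponent)
    (hC : CompInfinite G {v} A C) {o : V} (ho : G.dist o v < r) :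
    ∃ (x : V) (hxv : x ∈ ({v}ᶜ : Set V)), G.dist o x = r ∧
      (G.induce ({v}ᶜ : Set V)).connectedComponentMk ⟨x, hxv⟩ = C := by
  have hconn := hT.isConnected
  -- pick a point of the component outside the ball of radius r
  have himg : (Subtype.val '' {x : ↥({v}ᶜ : Set V) |
      (G.induce ({v}ᶜ : Set V)).connectedComponentMk x = C ∧ (x : V) ∈ A}).Infinite :=
    hC.image Subtype.val_injective.injOn
  obtain ⟨a, ha, hafar⟩ := (himg.diff (ball_finite hconn hlf o r)).nonempty
  simp only [Set.mem_setOf_eq, Set.mem_image] at ha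
  obtain ⟨a₀, ⟨ha₀C, -⟩, rfl⟩ := ha
  have hra : r ≤ G.dist o (a₀ : V) := by
    simp only [Set.mem_setOf_eq] at hafar; omega
  obtain ⟨x, hx1, hx2⟩ := exists_vertex_at_dist hconn o (a₀ : V) r hra
  have hxv : x ∈ ({v}ᶜ : Set V) := by
    simp only [Set.mem_compl_iff, Set.mem_singleton_iff]
    intro h; rw [h] at hx1; omega
  have hkey : G.dist o (a₀ : V) = G.dist o x + G.dist x (a₀ : V) := by omega
  have := comp_eq_aux hT (by omega : G.dist o v < G.dist o x) hkey a₀.2 hxv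
  refine ⟨x, hxv, hx1, ?_⟩
  rw [← ha₀C, ← Subtype.coe_eta a₀ a₀.2, ← this]

theorem branching_near_triple_point (G : SimpleGraph V) (hT : G.IsTree)
    (hlf : G.LocallyFinite) (A : Set V) (r : ℕ) (hr : 1 ≤ r) (v : V)
    (h3 : ThreeEnds G {v} A) (o : V) (ho : G.dist o v < r) :
    (∃ x y : V, x ≠ y ∧ G.dist o x = r ∧ G.dist o y = r) ∧
      (∀ v' w' : V, G.dist o v' = r → G.dist o w' = r →
        (A \ (BranchSet G A o v' ∪ BranchSet G A o w')).Infinite) ∧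
      (∀ k : ℕ, 1 ≤ k → IsBranching G A k r o) := by
  obtain ⟨C₁, C₂, C₃, h12, h13, h23, hC₁, hC₂, hC₃⟩ := h3
  -- part (a)
  have parta : ∃ x y : V, x ≠ y ∧ G.dist o x = r ∧ G.dist o y = r := by
    obtain ⟨x, hxv, hx1, hx2⟩ := exists_vertex_at_dist_in_comp hT hlf C₁ hC₁ ho
    obtain ⟨y, hyv, hy1, hy2⟩ := exists_vertex_at_dist_in_comp hT hlf C₂ hC₂ ho
    refine ⟨x, y, ?_, hx1, hy1⟩
    intro h
    apply h12
    rw [← hx2, ← hy2]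
    congr 1
    exact Subtype.ext h
  -- part (b)
  have partb : ∀ v' w' : V, G.dist o v' = r → G.dist o w' = r →
      (A \ (BranchSet G A o v' ∪ BranchSet G A o w')).Infinite := by
    intro v' w' hv' hw'
    have hov' : G.dist o v < G.dist o v' := by omega
    have how' : G.dist o v < G.dist o w' := by omega
    have hv'm : v' ∈ ({v}ᶜ : Set V) := by
      simp only [Set.mem_compl_iff, Set.mem_singleton_iff]
      intro h; rw [h] at hov'; omega
    have hw'm : w' ∈ ({v}ᶜ : Set V) := by
      simp only [Set.mem_compl_iff, Set.mem_singleton_iff]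
      intro h; rw [h] at how'; omega
    set D₁ := (G.induce ({v}ᶜ : Set V)).connectedComponentMk ⟨v', hv'm⟩ with hD₁
    set D₂ := (G.induce ({v}ᶜ : Set V)).connectedComponentMk ⟨w', hw'm⟩ with hD₂
    -- choose a component different from both D₁ and D₂
    have hpick : ∃ C : (G.induce ({v}ᶜ : Set V)).ConnectedComponent,
        CompInfinite G {v} A C ∧ C ≠ D₁ ∧ C ≠ D₂ := by
      by_cases e11 : C₁ = D₁
      · by_cases e22 : C₂ = D₂
        · exact ⟨C₃, hC₃, e11 ▸ h13.symm, e22 ▸ h23.symm⟩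
        · by_cases e21 : C₂ = D₁
          · exact absurd (e11.trans e21.symm) h12
          · exact ⟨C₂, hC₂, e21, e22⟩
      · by_cases e12 : C₁ = D₂
        · by_cases e21 : C₂ = D₁
          · exact ⟨C₃, hC₃, e21 ▸ h23.symm, e12 ▸ h13.symm⟩
          · exact ⟨C₂, hC₂, e21, e12 ▸ h12.symm⟩
        · exact ⟨C₁, hC₁, e11, e12⟩
    obtain ⟨C, hCinf, hCD₁, hCD₂⟩ := hpick
    have himg : (Subtype.val '' {x : ↥({v}ᶜ : Set V) |
        (G.induce ({v}ᶜ : Set V)).connectedComponentMk x = C ∧ (x : V) ∈ A}).Infinite :=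
      hCinf.image Subtype.val_injective.injOn
    apply himg.mono
    rintro a ⟨a₀, ⟨ha₀C, ha₀A⟩, rfl⟩
    refine ⟨ha₀A, ?_⟩
    rintro (hmem | hmem)
    · obtain ⟨hav, hxv, hcomp⟩ := branchSet_comp hT hov' hmem
      apply hCD₁
      rw [← ha₀C, ← Subtype.coe_eta a₀ hav, hcomp]
    · obtain ⟨hav, hxv, hcomp⟩ := branchSet_comp hT how' hmem
      apply hCD₂
      rw [← ha₀C, ← Subtype.coe_eta a₀ hav, hcomp]
  refine ⟨parta, partb, ?_⟩
  intro k hk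
  refine ⟨parta, ?_⟩
  intro v' w' hv' hw'
  rw [(partb v' w' hv' hw').encard_eq]
  exact le_top
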